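/- arXiv:2012.14287 — 3 statements merged into one kernel-verified Lean document; each statement's English description precedes it below -/
import Mathlib

section
/- For all natural numbers $n\ge 0$ and real $x\in[-1,1]$, the Legendre polynomial satisfies $|P_n(x)| \le 1$. -/
open Polynomial

lemma itX (m : ℕ) (f : Polynomial ℝ) :
    derivative^[m+1] (X * f) = X * derivative^[m+1] f + ((m : Polynomial ℝ)+1) * derivative^[m] f := by
  induction m generalizing f with
  | zero => simp [derivative_mul]; ring
  | succ m ih =>
      rw [show m+1+1 = (m+1)+1 from rfl, Function.iterate_succ_apply' derivative (m+1),
        ih, derivative_add, derivative_mul, derivative_mul, derivative_X]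
      have e1 : 1 + m = m + 1 := by omega
      have e2 : 2 + m = m + 2 := by omega
      simp only [derivative_add, derivative_natCast, derivative_one, zero_add, zero_mul,
        add_zero, one_mul, e1, e2, Nat.succ_eq_add_one,
        ← Function.iterate_succ_apply' derivative]
      push_cast
      ring

lemma itXsq (m : ℕ) (f : Polynomial ℝ) :
    derivative^[m+2] ((X^2-1) * f) = (X^2-1) * derivative^[m+2] f
      + (2*((m : Polynomial ℝ)+2)) * (X * derivative^[m+1] f)
      + (((m : Polynomial ℝ)+2)*((m : Polynomial ℝ)+1)) * derivative^[m] f := by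
  induction m generalizing f with
  | zero =>
      show derivative (derivative ((X^2-1) * f)) = _
      simp only [derivative_mul, derivative_add, derivative_sub, derivative_pow, derivative_X, derivative_C, derivative_zero, derivative_ofNat, map_ofNat, C_1, C_eq_natCast, Nat.cast_ofNat,
        derivative_one, Function.iterate_succ_apply', Function.iterate_zero_apply]
      push_cast
      ring
  | succ m ih =>
      rw [show m+1+2 = (m+2)+1 from rfl, Function.iterate_succ_apply' derivative (m+2),
        ih, derivative_add, derivative_add, derivative_mul, derivative_mul, derivative_mul]
      have e1 : 1 + m = m + 1 := by omega
      have e2 : 2 + m = m + 2 := by omega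
      have e3 : 3 + m = m + 3 := by omega
      simp only [derivative_add, derivative_sub, derivative_natCast, derivative_one,
        derivative_ofNat, derivative_pow, derivative_X, derivative_mul, zero_add, zero_mul,
        mul_zero, add_zero, one_mul, mul_one, map_ofNat, C_1, C_eq_natCast, Nat.cast_ofNat, e1, e2, e3, Nat.succ_eq_add_one,
        ← Function.iterate_succ_apply' derivative]
      push_cast
      ring

lemma base_eq (n : ℕ) :
    (X^2-1) * derivative ((X^2-1)^n : Polynomial ℝ) = C (2*(n:ℝ)) * (X * (X^2-1)^n) := by
  cases n with
  | zero => simp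
  | succ m =>
      rw [derivative_pow]
      simp only [derivative_sub, derivative_pow, derivative_X, derivative_one, Nat.add_sub_cancel]
      simp only [map_mul, map_add, map_natCast, map_ofNat, C_1]
      push_cast
      ring

lemma ode (n : ℕ) :
    (X^2-1) * derivative^[n+2] ((X^2-1)^n : Polynomial ℝ)
      + 2 * X * derivative^[n+1] ((X^2-1)^n : Polynomial ℝ)
      = ((n : Polynomial ℝ)*((n : Polynomial ℝ)+1)) * derivative^[n] ((X^2-1)^n : Polynomial ℝ) := by
  cases n with
  | zero => simp
  | succ k =>
      have h := congrArg (derivative^[k+2]) (base_eq (k+1))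
      rw [iterate_derivative_C_mul, itXsq k, itX (k+1)] at h
      simp only [← Function.iterate_succ_apply derivative, map_mul, map_natCast, map_ofNat,
        C_eq_natCast] at h ⊢
      push_cast at h ⊢
      have e1 : k+1+1 = k+2 := rfl
      have e2 : k+1+2 = k+3 := rfl
      have e3 : k+2+1 = k+3 := rfl
      simp only [Nat.succ_eq_add_one, e1, e2, e3] at h ⊢
      linear_combination h

lemma Qeval1 (n : ℕ) : ((derivative^[n] ((X^2-1)^n : Polynomial ℝ)).eval 1) = 2^n * n.factorial := by
  have hsplit : ((X^2-1 : Polynomial ℝ))^n = (X - C 1)^n * (X - C (-1))^n := by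
    rw [← mul_pow]; congr 1; simp [C_1, map_neg]; ring
  rw [hsplit, iterate_derivative_mul, eval_finset_sum]
  rw [Finset.sum_eq_single 0]
  · rw [Nat.choose_zero_right, one_smul, Nat.sub_zero, Function.iterate_zero_apply,
      iterate_derivative_X_sub_pow_self]
    simp
    ring
  · intro k hk hk0
    rw [iterate_derivative_X_sub_pow]
    have hkn : k ≤ n := by simpa [Nat.lt_succ_iff] using hk
    have : n - (n - k) = k := by omega
    simp [this, smul_mul_assoc, zero_pow, hk0]
  · intro h; simp at h

lemma QevalNeg1 (n : ℕ) : ((derivative^[n] ((X^2-1)^n : Polynomial ℝ)).eval (-1)) = (-2)^n * n.factorial := by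
  have hsplit : ((X^2-1 : Polynomial ℝ))^n = (X - C 1)^n * (X - C (-1))^n := by
    rw [← mul_pow]; congr 1; simp [C_1, map_neg]; ring
  rw [hsplit, iterate_derivative_mul, eval_finset_sum]
  rw [Finset.sum_eq_single n]
  · rw [Nat.choose_self, one_smul, Nat.sub_self, Function.iterate_zero_apply,
      iterate_derivative_X_sub_pow_self]
    simp only [eval_mul, eval_pow, eval_sub, eval_X, eval_C, eval_natCast]
    ring
  · intro k hk hkn
    rw [iterate_derivative_X_sub_pow (c := (-1:ℝ))]
    have hkle : k ≤ n := by simpa [Nat.lt_succ_iff] using hk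
    have : n - k ≠ 0 := by omega
    simp [smul_mul_assoc, mul_smul_comm, zero_pow, this]
  · intro h; simp at h


/-- The Legendre polynomial via the Rodrigues formula. -/
noncomputable def legendrePoly (n : ℕ) : Polynomial ℝ :=
  Polynomial.C (1 / (2 ^ n * (n.factorial : ℝ))) *
    (Polynomial.derivative^[n] ((Polynomial.X ^ 2 - 1) ^ n))
lemma fact_ne : ∀ n : ℕ, (2:ℝ)^n * n.factorial ≠ 0 := fun n => by positivity

lemma P_eval_one (n : ℕ) : (legendrePoly n).eval 1 = 1 := by
  rw [legendrePoly, eval_mul, eval_C, Qeval1]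
  field_simp

lemma P_eval_neg_one (n : ℕ) : (legendrePoly n).eval (-1) = (-1)^n := by
  rw [legendrePoly, eval_mul, eval_C, QevalNeg1]
  rw [show ((-2:ℝ))^n = (-1)^n * 2^n by rw [← neg_one_mul, mul_pow]]
  field_simp

lemma P_ode (n : ℕ) :
    (X^2-1) * derivative (derivative (legendrePoly n)) + 2 * X * derivative (legendrePoly n)
      = ((n : Polynomial ℝ)*((n : Polynomial ℝ)+1)) * legendrePoly n := by
  have h1 : derivative (legendrePoly n) = C (1 / (2 ^ n * (n.factorial : ℝ))) *
      derivative^[n+1] ((X ^ 2 - 1) ^ n) := by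
    rw [legendrePoly, derivative_C_mul, Function.iterate_succ_apply' derivative n]
  have h2 : derivative (derivative (legendrePoly n)) = C (1 / (2 ^ n * (n.factorial : ℝ))) *
      derivative^[n+2] ((X ^ 2 - 1) ^ n) := by
    rw [h1, derivative_C_mul, Function.iterate_succ_apply' derivative (n+1)]
  rw [h2, h1, legendrePoly]
  linear_combination C (1 / (2 ^ n * (n.factorial : ℝ))) * ode n

noncomputable def G (n : ℕ) : Polynomial ℝ :=
  ((n : Polynomial ℝ)*((n : Polynomial ℝ)+1)) * (legendrePoly n)^2
    + (1-X^2) * (derivative (legendrePoly n))^2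

lemma G_deriv (n : ℕ) : derivative (G n) = 2 * X * (derivative (legendrePoly n))^2 := by
  have h := P_ode n
  rw [G]
  simp only [derivative_add, derivative_mul, derivative_pow, derivative_sub, derivative_X,
    derivative_one, derivative_natCast, C_eq_natCast, Nat.cast_ofNat, map_ofNat, zero_mul, mul_zero, add_zero, zero_add, zero_sub,
    mul_one, pow_one]
  linear_combination (-2 * derivative (legendrePoly n)) * h

lemma G_eval_one (n : ℕ) : (G n).eval 1 = (n:ℝ)*((n:ℝ)+1) := by
  simp [G, P_eval_one]

lemma G_eval_neg_one (n : ℕ) : (G n).eval (-1) = (n:ℝ)*((n:ℝ)+1) := by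
  simp [G, P_eval_neg_one]
  rw [← pow_mul, mul_comm n 2, pow_mul]
  norm_num

/-- The classical uniform bound `|P_n(x)| ≤ 1` on `[-1, 1]`. -/
theorem legendre_abs_le_one (n : ℕ) (x : ℝ) (hx : x ∈ Set.Icc (-1 : ℝ) 1) :
    |(legendrePoly n).eval x| ≤ 1 := by
  obtain ⟨hx1, hx2⟩ := hx
  rcases Nat.eq_zero_or_pos n with h0 | hpos
  · subst h0
    simp [legendrePoly]
  have hd : ∀ y : ℝ, HasDerivAt (fun t => (G n).eval t)
      (2*y*((derivative (legendrePoly n)).eval y)^2) y := by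
    intro y
    have h := (G n).hasDerivAt y
    rw [G_deriv] at h
    simpa using h
  have mono : MonotoneOn (fun t => (G n).eval t) (Set.Icc 0 1) := by
    apply monotoneOn_of_deriv_nonneg (convex_Icc 0 1) (Polynomial.continuousOn _)
    · intro y _; exact (hd y).differentiableAt.differentiableWithinAt
    · intro y hy
      rw [interior_Icc] at hy
      rw [(hd y).deriv]
      have h0y : (0:ℝ) ≤ y := le_of_lt hy.1
      positivity
  have anti : AntitoneOn (fun t => (G n).eval t) (Set.Icc (-1) 0) := by
    apply antitoneOn_of_deriv_nonpos (convex_Icc (-1) 0) (Polynomial.continuousOn _)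
    · intro y _; exact (hd y).differentiableAt.differentiableWithinAt
    · intro y hy
      rw [interior_Icc] at hy
      rw [(hd y).deriv]
      have h0y : y ≤ 0 := le_of_lt hy.2
      nlinarith [sq_nonneg ((derivative (legendrePoly n)).eval y)]
  have hGle : (G n).eval x ≤ (n:ℝ)*((n:ℝ)+1) := by
    rcases le_total x 0 with hle | hge
    · have := anti (Set.mem_Icc.mpr ⟨le_refl (-1:ℝ), by norm_num⟩)
        (Set.mem_Icc.mpr ⟨hx1, hle⟩) hx1
      simpa [G_eval_neg_one] using this
    · have := mono (Set.mem_Icc.mpr ⟨hge, hx2⟩)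
        (Set.mem_Icc.mpr ⟨zero_le_one, le_refl (1:ℝ)⟩) hx2
      simpa [G_eval_one] using this
  have hGform : (G n).eval x = (n:ℝ)*((n:ℝ)+1) * ((legendrePoly n).eval x)^2
      + (1-x^2) * ((derivative (legendrePoly n)).eval x)^2 := by
    simp [G]
  have hx2nn : (0:ℝ) ≤ 1 - x^2 := by nlinarith
  have hn1 : (1:ℝ) ≤ (n:ℝ) := by exact_mod_cast hpos
  rw [← sq_le_one_iff_abs_le_one]
  have hcpos : (0:ℝ) < (n:ℝ)*((n:ℝ)+1) := by nlinarith
  have hkey : (n:ℝ)*((n:ℝ)+1) * ((legendrePoly n).eval x)^2 ≤ (n:ℝ)*((n:ℝ)+1) * 1 := by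
    nlinarith [mul_nonneg hx2nn (sq_nonneg ((derivative (legendrePoly n)).eval x))]
  exact (mul_le_mul_iff_right₀ hcpos).mp hkey
end

section
/- For natural numbers $n\ge 1$, $0\le m\le n$, and $\nu\ge 0$, the solid-harmonic translation coefficients $c_{\nu\mu} := \left(\frac{2n+1}{2n+2\nu+1}\binom{n+m+\nu-\mu}{\nu-\mu}\binom{n-m+\nu+\mu}{\nu+\mu}\right)^{1/2}$ satisfy $\sum_{\mu=-\nu}^{\nu} c_{\nu\mu} \le \left(3(2\nu+1)\binom{2\nu+2n}{2\nu}\right)^{1/2}$. -/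
open Finset

/-- Vandermonde-type convolution:
`∑_{k=0}^{t} C(a+k, k) C(b+t-k, t-k) = C(a+b+t+1, t)`. -/
lemma vand_conv (a : ℕ) : ∀ t b : ℕ,
    ∑ k ∈ range (t + 1), (a + k).choose k * (b + (t - k)).choose (t - k)
      = (a + b + t + 1).choose t := by
  intro t
  induction t with
  | zero => intro b; simp
  | succ t iht =>
    intro b
    induction b with
    | zero =>
      have h0 : ∀ s : ℕ, ∑ k ∈ range (s + 1),
          (a + k).choose k * ((0 : ℕ) + (s - k)).choose (s - k)
            = ∑ k ∈ range (s + 1), (a + k).choose k := by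
        intro s; refine sum_congr rfl fun k _ => ?_; simp
      rw [h0, sum_range_succ, ← h0 t, iht 0]
      have pas : (a + 0 + (t + 1) + 1).choose (t + 1)
          = (a + 0 + t + 1).choose t + (a + 0 + t + 1).choose (t + 1) := by
        have h1 : a + 0 + (t + 1) + 1 = (a + 0 + t + 1) + 1 := by ring
        rw [h1, Nat.choose_succ_succ']
      rw [pas]
      have h2 : a + 0 + t + 1 = a + t + 1 := by ring
      have h3 : a + (t + 1) = a + t + 1 := by ring
      rw [h2, h3]
    | succ b ihb =>
      have key : ∀ k ∈ range (t + 1),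
          (a + k).choose k * ((b + 1) + ((t + 1) - k)).choose ((t + 1) - k)
            = (a + k).choose k * (b + ((t + 1) - k)).choose ((t + 1) - k)
              + (a + k).choose k * ((b + 1) + (t - k)).choose (t - k) := by
        intro k hk
        rw [mem_range] at hk
        have h1 : t + 1 - k = (t - k) + 1 := by omega
        rw [h1]
        have h2 : b + 1 + (t - k + 1) = (b + 1 + (t - k)) + 1 := by ring
        rw [h2, Nat.choose_succ_succ']
        have h3 : b + (t - k + 1) = b + 1 + (t - k) := by ring
        rw [h3]
        ring
      rw [sum_range_succ, Finset.sum_congr rfl key, Finset.sum_add_distrib,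
        iht (b + 1)]
      rw [sum_range_succ] at ihb
      simp only [Nat.sub_self, Nat.add_zero, Nat.choose_zero_right, mul_one] at ihb ⊢
      have pas : (a + (b + 1) + (t + 1) + 1).choose (t + 1)
          = (a + b + (t + 1) + 1).choose t + (a + b + (t + 1) + 1).choose (t + 1) := by
        have h1 : a + (b + 1) + (t + 1) + 1 = (a + b + (t + 1) + 1) + 1 := by ring
        rw [h1, Nat.choose_succ_succ']
      have h4 : a + (b + 1) + t + 1 = a + b + (t + 1) + 1 := by ring
      rw [h4]
      linarith [ihb, pas]

/-- Bound on the sum of the solid-harmonic translation coefficients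
`c_{νμ} = ((2n+1)/(2n+2ν+1) ⋅ C(n+m+ν-μ, ν-μ) ⋅ C(n-m+ν+μ, ν+μ))^{1/2}`:
`∑_{μ=-ν}^{ν} c_{νμ} ≤ (3(2ν+1) C(2ν+2n, 2ν))^{1/2}`. -/
theorem translation_coefficient_sum_bound (n m ν : ℕ) (hn : 1 ≤ n) (hm : m ≤ n) :
    (∑ μ ∈ Finset.Icc (-(ν : ℤ)) (ν : ℤ),
        Real.sqrt (((2 * n + 1 : ℝ)) / (2 * n + 2 * ν + 1) *
          (Nat.choose (((n : ℤ) + m + ν - μ).toNat) (((ν : ℤ) - μ).toNat) : ℝ) *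
          (Nat.choose (((n : ℤ) - m + ν + μ).toNat) (((ν : ℤ) + μ).toNat) : ℝ)))
      ≤ Real.sqrt (3 * (2 * ν + 1) * (Nat.choose (2 * ν + 2 * n) (2 * ν) : ℝ)) := by
  set T : ℝ := (2 * n + 1 : ℝ) / (2 * n + 2 * ν + 1) with hT
  have hTpos : 0 < T := by
    apply div_pos <;> positivity
  -- the natural-indexed summand
  set A : ℕ → ℝ := fun k =>
    T * ((n + m + k).choose k : ℝ) * (((n - m) + (2 * ν - k)).choose (2 * ν - k) : ℝ)
    with hA
  have hAnn : ∀ k, 0 ≤ A k := by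
    intro k; rw [hA]; positivity
  -- reindex the sum
  have hre : (∑ μ ∈ Finset.Icc (-(ν : ℤ)) (ν : ℤ),
        Real.sqrt (T *
          (Nat.choose (((n : ℤ) + m + ν - μ).toNat) (((ν : ℤ) - μ).toNat) : ℝ) *
          (Nat.choose (((n : ℤ) - m + ν + μ).toNat) (((ν : ℤ) + μ).toNat) : ℝ)))
      = ∑ k ∈ range (2 * ν + 1), Real.sqrt (A k) := by
    refine Finset.sum_nbij' (fun μ => ((ν : ℤ) - μ).toNat) (fun k => (ν : ℤ) - k)
      ?_ ?_ ?_ ?_ ?_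
    · intro μ hμ
      simp only [mem_Icc] at hμ
      simp only [mem_range]
      omega
    · intro k hk
      simp only [mem_range] at hk
      simp only [mem_Icc]
      omega
    · intro μ hμ
      simp only [mem_Icc] at hμ
      omega
    · intro k hk
      simp only [mem_range] at hk
      omega
    · intro μ hμ
      simp only [mem_Icc] at hμ
      have e1 : ((n : ℤ) + m + ν - μ).toNat = n + m + ((ν : ℤ) - μ).toNat := by omega
      have e3 : ((n : ℤ) - m + ν + μ).toNat
          = (n - m) + (2 * ν - ((ν : ℤ) - μ).toNat) := by omega
      have e4 : ((ν : ℤ) + μ).toNat = 2 * ν - ((ν : ℤ) - μ).toNat := by omega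
      simp only [hA]
      rw [e1, e3, e4]
  rw [hre]
  -- nonnegative sum
  have hsum_nn : 0 ≤ ∑ k ∈ range (2 * ν + 1), Real.sqrt (A k) := by
    apply Finset.sum_nonneg; intro k _; exact Real.sqrt_nonneg _
  -- the key identity : ∑ A k = C(2n+2ν, 2ν)
  have hnat : ∑ k ∈ range (2 * ν + 1),
      (n + m + k).choose k * ((n - m) + (2 * ν - k)).choose (2 * ν - k)
        = (2 * n + 2 * ν + 1).choose (2 * ν) := by
    have := vand_conv (n + m) (2 * ν) (n - m)
    have h1 : n + m + (n - m) + 2 * ν + 1 = 2 * n + 2 * ν + 1 := by omega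
    rwa [h1] at this
  have hratio : ((2 * n + 2 * ν).choose (2 * ν) : ℝ) * (2 * n + 2 * ν + 1)
      = ((2 * n + 2 * ν + 1).choose (2 * ν) : ℝ) * (2 * n + 1) := by
    have := Nat.choose_mul_succ_eq (2 * n + 2 * ν) (2 * ν)
    have h2 : 2 * n + 2 * ν + 1 - 2 * ν = 2 * n + 1 := by omega
    rw [h2] at this
    exact_mod_cast this
  have hsumA : ∑ k ∈ range (2 * ν + 1), A k
      = ((2 * n + 2 * ν).choose (2 * ν) : ℝ) := by
    have : ∑ k ∈ range (2 * ν + 1), A k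
        = T * ∑ k ∈ range (2 * ν + 1),
            ((n + m + k).choose k : ℝ) *
              (((n - m) + (2 * ν - k)).choose (2 * ν - k) : ℝ) := by
      rw [Finset.mul_sum]; refine sum_congr rfl fun k _ => ?_; rw [hA]; ring
    rw [this]
    have hc : (∑ k ∈ range (2 * ν + 1),
        ((n + m + k).choose k : ℝ) *
          (((n - m) + (2 * ν - k)).choose (2 * ν - k) : ℝ))
        = ((2 * n + 2 * ν + 1).choose (2 * ν) : ℝ) := by
      exact_mod_cast congrArg (Nat.cast : ℕ → ℝ) hnat
    rw [hc, hT]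
    have hd : (2 * (n : ℝ) + 2 * ν + 1) ≠ 0 := by positivity
    field_simp
    linarith [hratio]
  -- Cauchy–Schwarz
  apply Real.le_sqrt_of_sq_le
  have hcs := sq_sum_le_card_mul_sum_sq
    (s := range (2 * ν + 1)) (f := fun k => Real.sqrt (A k))
  have hsq : ∀ k ∈ range (2 * ν + 1), Real.sqrt (A k) ^ 2 = A k := by
    intro k _; exact Real.sq_sqrt (hAnn k)
  rw [Finset.sum_congr rfl hsq, Finset.card_range] at hcs
  refine le_trans hcs ?_
  rw [hsumA]
  have hcast : ((2 * ν + 1 : ℕ) : ℝ) = 2 * (ν : ℝ) + 1 := by push_cast; ring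
  rw [hcast]
  have hch : ((2 * n + 2 * ν).choose (2 * ν) : ℝ)
      = ((2 * ν + 2 * n).choose (2 * ν) : ℝ) := by
    congr 2; omega
  rw [hch]
  have hcnn : (0 : ℝ) ≤ ((2 * ν + 2 * n).choose (2 * ν) : ℝ) := Nat.cast_nonneg _
  nlinarith [hcnn, sq_nonneg ((ν : ℝ))]
end

section
/- The Rothe–Hagen identity in the following special form holds: for natural numbers $n\ge 1$, $0\le m\le n$, $\nu\ge 0$, $\sum_{\mu=-\nu}^{\nu} \frac{n+m}{n+m+\nu-\mu}\binom{n+m+\nu-\mu}{\nu-\mu}\binom{n-m+\nu+\mu}{\nu+\mu} = \binom{2n+2\nu}{2\nu}$. -/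
open Finset

/-- Hockey stick: `∑_{j=0}^{N} C(s+j, j) = C(s+N+1, N)`. -/
lemma hockey (s N : ℕ) : ∑ j ∈ range (N + 1), (s + j).choose j = (s + N + 1).choose N := by
  have h1 : ∀ j ∈ range (N + 1), (s + j).choose j = (s + j).choose s := by
    intro j _
    exact (Nat.choose_symm_add).symm
  rw [Finset.sum_congr rfl h1]
  have h2 : ∑ m ∈ Icc s (s + N), m.choose s = ∑ j ∈ range (N + 1), (s + j).choose s := by
    rw [← Finset.Ico_add_one_right_eq_Icc, Finset.sum_Ico_eq_sum_range]
    have : s + N + 1 - s = N + 1 := by omega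
    rw [this]
  rw [← h2, Nat.sum_Icc_choose]
  exact Nat.choose_symm_of_eq_add (by omega)

lemma hockey' (s N : ℕ) :
    ∑ k ∈ range (N + 1), (s + (N - k)).choose (N - k) = (s + N + 1).choose N := by
  rw [← hockey s N, ← Finset.sum_range_reflect (fun j => (s + j).choose j) (N + 1)]
  apply Finset.sum_congr rfl
  intro k hk
  simp only [Finset.mem_range] at hk
  have : N + 1 - 1 - k = N - k := by omega
  rw [this]

/-- Convolution identity:
`∑_{k=0}^{N} C(r+k,k) C(s+N-k, N-k) = C(r+s+N+1, N)`. -/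
lemma conv (r : ℕ) : ∀ s N : ℕ,
    ∑ k ∈ range (N + 1), (r + k).choose k * (s + (N - k)).choose (N - k)
      = (r + s + N + 1).choose N := by
  induction r with
  | zero =>
    intro s N
    simp only [Nat.zero_add, Nat.choose_self, one_mul]
    exact hockey' s N
  | succ r ih =>
    intro s N
    have key : ∀ k : ℕ, (r + 1 + k).choose k = ∑ j ∈ range (k + 1), (r + j).choose j := by
      intro k
      rw [hockey r k]
      congr 1
      omega
    calc ∑ k ∈ range (N + 1), (r + 1 + k).choose k * (s + (N - k)).choose (N - k)
        = ∑ k ∈ range (N + 1), ∑ j ∈ range (k + 1),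
            (r + j).choose j * (s + (N - k)).choose (N - k) := by
          apply Finset.sum_congr rfl; intro k _
          rw [key k, Finset.sum_mul]
      _ = ∑ j ∈ range (N + 1), ∑ k ∈ Ico j (N + 1),
            (r + j).choose j * (s + (N - k)).choose (N - k) := by
          simp_rw [Finset.range_eq_Ico]
          exact (Finset.sum_Ico_Ico_comm 0 (N + 1)
            (fun j k => (r + j).choose j * (s + (N - k)).choose (N - k))).symm
      _ = ∑ j ∈ range (N + 1), (r + j).choose j * ((s + 1) + (N - j)).choose (N - j) := by
          apply Finset.sum_congr rfl; intro j hj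
          simp only [Finset.mem_range] at hj
          rw [← Finset.mul_sum]
          congr 1
          rw [Finset.sum_Ico_eq_sum_range]
          have hNj : N + 1 - j = (N - j) + 1 := by omega
          rw [hNj]
          have hfun : ∀ i ∈ range ((N - j) + 1),
              (s + (N - (j + i))).choose (N - (j + i))
                = (s + ((N - j) - i)).choose ((N - j) - i) := by
            intro i hi
            simp only [Finset.mem_range] at hi
            have : N - (j + i) = (N - j) - i := by omega
            rw [this]
          rw [Finset.sum_congr rfl hfun, hockey' s (N - j)]
          congr 1
          omega
      _ = (r + (s + 1) + N + 1).choose N := ih (s + 1) N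
      _ = (r + 1 + s + N + 1).choose N := by congr 1; omega

/-- A special form of the Rothe–Hagen convolution identity: for `n ≥ 1`, `0 ≤ m ≤ n`,
`ν ≥ 0`,
`∑_{μ=-ν}^{ν} (n+m)/(n+m+ν-μ) C(n+m+ν-μ, ν-μ) C(n-m+ν+μ, ν+μ) = C(2n+2ν, 2ν)`. -/
theorem rothe_hagen_special (n m ν : ℕ) (hn : 1 ≤ n) (hm : m ≤ n) :
    (∑ μ ∈ Finset.Icc (-(ν : ℤ)) (ν : ℤ),
        ((n : ℝ) + m) / ((n : ℝ) + m + ν - μ) *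
          (Nat.choose (((n : ℤ) + m + ν - μ).toNat) (((ν : ℤ) - μ).toNat) : ℝ) *
          (Nat.choose (((n : ℤ) - m + ν + μ).toNat) (((ν : ℤ) + μ).toNat) : ℝ))
      = (Nat.choose (2 * n + 2 * ν) (2 * ν) : ℝ) := by
  have hre : (∑ μ ∈ Finset.Icc (-(ν : ℤ)) (ν : ℤ),
        ((n : ℝ) + m) / ((n : ℝ) + m + ν - μ) *
          (Nat.choose (((n : ℤ) + m + ν - μ).toNat) (((ν : ℤ) - μ).toNat) : ℝ) *
          (Nat.choose (((n : ℤ) - m + ν + μ).toNat) (((ν : ℤ) + μ).toNat) : ℝ))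
      = ∑ k ∈ range (2 * ν + 1),
          ((n : ℝ) + m) / ((n : ℝ) + m + k) *
            (Nat.choose (n + m + k) k : ℝ) *
            (Nat.choose ((n - m) + (2 * ν - k)) (2 * ν - k) : ℝ) := by
    rw [Finset.sum_bij' (i := fun μ _ => ((ν : ℤ) - μ).toNat)
      (j := fun k _ => (ν : ℤ) - k)]
    · intro μ hμ
      simp only [Finset.mem_Icc] at hμ
      simp only [Finset.mem_range]
      omega
    · intro k hk
      simp only [Finset.mem_range] at hk
      simp only [Finset.mem_Icc]
      omega
    · intro μ hμ
      simp only [Finset.mem_Icc] at hμ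
      omega
    · intro k hk
      simp only [Finset.mem_range] at hk
      omega
    · intro μ hμ
      simp only [Finset.mem_Icc] at hμ
      have h1 : ((((ν : ℤ) - μ).toNat : ℕ) : ℝ) = (ν : ℝ) - (μ : ℝ) := by
        have h := Int.toNat_of_nonneg (by omega : (0:ℤ) ≤ (ν:ℤ) - μ)
        exact_mod_cast congrArg (fun x : ℤ => (x : ℝ)) h
      have e1 : ((n : ℤ) + m + ν - μ).toNat = n + m + ((ν : ℤ) - μ).toNat := by omega
      have e2 : ((n : ℤ) - m + ν + μ).toNat
          = (n - m) + (2 * ν - ((ν : ℤ) - μ).toNat) := by omega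
      have e3 : ((ν : ℤ) + μ).toNat = 2 * ν - ((ν : ℤ) - μ).toNat := by omega
      rw [e1, e2, e3]
      congr 2
      rw [h1]
      ring
  rw [hre]
  have hterm : ∀ k ∈ range (2 * ν + 1),
      ((n : ℝ) + m) / ((n : ℝ) + m + k) *
          (Nat.choose (n + m + k) k : ℝ) *
          (Nat.choose ((n - m) + (2 * ν - k)) (2 * ν - k) : ℝ)
        = (Nat.choose ((n + m - 1) + k) k : ℝ) *
          (Nat.choose ((n - m) + (2 * ν - k)) (2 * ν - k) : ℝ) := by
    intro k _
    congr 1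
    have hnat : (n + m + k) * Nat.choose ((n + m - 1) + k) k
        = (n + m) * Nat.choose (n + m + k) k := by
      have h1 : Nat.choose ((n + m - 1) + k) k = Nat.choose ((n + m - 1) + k) (n + m - 1) :=
        Nat.choose_symm_of_eq_add (by omega)
      have h2 : Nat.choose (n + m + k) (n + m) = Nat.choose (n + m + k) k :=
        Nat.choose_symm_of_eq_add (by omega)
      rw [h1, ← h2]
      have h := Nat.add_one_mul_choose_eq ((n + m - 1) + k) (n + m - 1)
      have hs1 : Nat.succ ((n + m - 1) + k) = n + m + k := by omega
      have hs2 : Nat.succ (n + m - 1) = n + m := by omega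
      simp only [Nat.succ_eq_add_one] at hs1 hs2; rw [hs1, hs2] at h
      rw [h]
      ring
    have hpos : (0 : ℝ) < (n : ℝ) + m + k := by
      have : (1:ℝ) ≤ (n:ℝ) := by exact_mod_cast hn
      positivity
    have hcast : ((n : ℝ) + m + k) * (Nat.choose ((n + m - 1) + k) k : ℝ)
        = ((n : ℝ) + m) * (Nat.choose (n + m + k) k : ℝ) := by
      exact_mod_cast congrArg (fun x : ℕ => (x : ℝ)) hnat
    field_simp
    linarith [hcast]
  rw [Finset.sum_congr rfl hterm]
  have h := conv (n + m - 1) (n - m) (2 * ν)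
  have hfin : (n + m - 1) + (n - m) + 2 * ν + 1 = 2 * n + 2 * ν := by omega
  rw [hfin] at h
  exact_mod_cast h
end
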